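/- If the assignment σ_i ↦ I_{i-1} ⊕ [[a,b],[c,d]] ⊕ I_{n-i-1} (n ≥ 3) defines a group homomorphism from B_n to GL_n(K) for a field K, and the block [[a,b],[c,d]] is not the identity matrix, then at least one of a, d is zero. -/

import Mathlib

/-- The braid relations on `m` generators. -/
def braidRels (m : ℕ) : Set (FreeGroup (Fin m)) :=
  { r | (∃ i j : Fin m, (i : ℕ) + 1 = (j : ℕ) ∧
          r = .of i * .of j * .of i * (.of j * .of i * .of j)⁻¹) ∨
        (∃ i j : Fin m, (i : ℕ) + 2 ≤ (j : ℕ) ∧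
          r = .of i * .of j * (.of j * .of i)⁻¹) }

/-- The Artin braid group on `n` strands. -/
abbrev BraidGroup (n : ℕ) : Type := PresentedGroup (braidRels (n - 1))

/-- The Artin generators (0-indexed: `σ i` crosses strands `i+1` and `i+2`). -/
def σ {n : ℕ} (i : Fin (n - 1)) : BraidGroup n := PresentedGroup.of i

/-- `genMat R n a b c d i` : the n×n identity matrix, except with the 2×2 block
`[[a,b],[c,d]]` in (0-indexed) rows/columns `i, i+1`. -/
def genMat (R : Type*) [CommRing R] (n : ℕ) (a b c d : R) (i : ℕ) :
    Matrix (Fin n) (Fin n) R := fun j k =>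
  if (j : ℕ) = i ∧ (k : ℕ) = i then a
  else if (j : ℕ) = i ∧ (k : ℕ) = i + 1 then b
  else if (j : ℕ) = i + 1 ∧ (k : ℕ) = i then c
  else if (j : ℕ) = i + 1 ∧ (k : ℕ) = i + 1 then d
  else if j = k then 1 else 0

/-- The ring of Laurent polynomials in two variables over ℤ. -/
abbrev L2 : Type := LaurentPolynomial (LaurentPolynomial ℤ)

noncomputable def tL : L2 := LaurentPolynomial.T 1
noncomputable def bL : L2 := LaurentPolynomial.C (LaurentPolynomial.T 1)
noncomputable def tLinv : L2 := LaurentPolynomial.T (-1)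
noncomputable def bLinv : L2 := LaurentPolynomial.C (LaurentPolynomial.T (-1))


lemma genMat_mul_apply (K : Type*) [Field K] (n i : ℕ) (a b c d : K) (hi : i + 1 < n)
    (N : Matrix (Fin n) (Fin n) K) (j k : Fin n) :
    (genMat K n a b c d i * N) j k =
      if (j : ℕ) = i then a * N ⟨i, by omega⟩ k + b * N ⟨i + 1, hi⟩ k
      else if (j : ℕ) = i + 1 then c * N ⟨i, by omega⟩ k + d * N ⟨i + 1, hi⟩ k
      else N j k := by
  rw [Matrix.mul_apply]
  split_ifs with h1 h2
  · rw [Finset.sum_eq_add ⟨i, by omega⟩ ⟨i + 1, hi⟩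
      (by simp [Fin.ext_iff]) ?_ (by simp) (by simp)]
    · simp [genMat, h1]
    · rintro p - ⟨hp1, hp2⟩
      have hp1' : (p : ℕ) ≠ i := fun h => hp1 (Fin.ext h)
      have hp2' : (p : ℕ) ≠ i + 1 := fun h => hp2 (Fin.ext h)
      have hjp : j ≠ p := fun h => hp1' (h ▸ h1)
      simp [genMat, h1, hp1', hp2', hjp]
  · rw [Finset.sum_eq_add ⟨i, by omega⟩ ⟨i + 1, hi⟩
      (by simp [Fin.ext_iff]) ?_ (by simp) (by simp)]
    · simp [genMat, h2]
    · rintro p - ⟨hp1, hp2⟩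
      have hp1' : (p : ℕ) ≠ i := fun h => hp1 (Fin.ext h)
      have hp2' : (p : ℕ) ≠ i + 1 := fun h => hp2 (Fin.ext h)
      have hjp : j ≠ p := fun h => hp2' (h ▸ h2)
      simp [genMat, h1, h2, hp1', hp2', hjp]
  · rw [Finset.sum_eq_single j]
    · simp [genMat, h1, h2]
    · intro p _ hp
      have : j ≠ p := fun h => hp h.symm
      simp [genMat, h1, h2, this]
    · simp


theorem stmt_15 (K : Type*) [Field K] (n : ℕ) (hn : 3 ≤ n) (a b c d : K)
    (hdet : a * d - b * c ≠ 0)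
    (Ψ : BraidGroup n →* GL (Fin n) K)
    (hΨ : ∀ i : Fin (n - 1), (↑(Ψ (σ i)) : Matrix (Fin n) (Fin n) K) = genMat K n a b c d (i : ℕ))
    (hblock : !![a, b; c, d] ≠ 1) :
    a = 0 ∨ d = 0 := by
  have hm : 2 ≤ n - 1 := by omega
  set i0 : Fin (n - 1) := ⟨0, by omega⟩
  set i1 : Fin (n - 1) := ⟨1, by omega⟩
  -- the braid relation in the group
  have hrelmem : (FreeGroup.of i0 * FreeGroup.of i1 * FreeGroup.of i0 *
      (FreeGroup.of i1 * FreeGroup.of i0 * FreeGroup.of i1)⁻¹) ∈ braidRels (n - 1) :=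
    Or.inl ⟨i0, i1, rfl, rfl⟩
  have hrel : σ i0 * σ i1 * σ i0 = σ i1 * σ i0 * σ i1 := by
    have h1 : ((QuotientGroup.mk (FreeGroup.of i0 * FreeGroup.of i1 * FreeGroup.of i0 *
        (FreeGroup.of i1 * FreeGroup.of i0 * FreeGroup.of i1)⁻¹)) :
        PresentedGroup (braidRels (n - 1))) = 1 :=
      (QuotientGroup.eq_one_iff _).mpr (Subgroup.subset_normalClosure hrelmem)
    have h2 : σ i0 * σ i1 * σ i0 * (σ i1 * σ i0 * σ i1)⁻¹ = 1 := h1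
    exact mul_inv_eq_one.mp h2
  -- the matrix relation
  set M0 : Matrix (Fin n) (Fin n) K := genMat K n a b c d 0 with hM0
  set M1 : Matrix (Fin n) (Fin n) K := genMat K n a b c d 1 with hM1
  have hmat : M0 * M1 * M0 = M1 * M0 * M1 := by
    have := congrArg (fun g => ((Ψ g : GL (Fin n) K) : Matrix (Fin n) (Fin n) K)) hrel
    simpa [map_mul, Units.val_mul, hΨ, hM0, hM1] using this
  have h03 : (0 : ℕ) + 1 < n := by omega
  have h13 : (1 : ℕ) + 1 < n := by omega
  have L0 := genMat_mul_apply K n 0 a b c d h03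
  have L1 := genMat_mul_apply K n 1 a b c d h13
  simp only [← hM0, ← hM1] at L0 L1
  have f0 : Fin n := ⟨0, by omega⟩
  have e00 := congrFun (congrFun hmat ⟨0, by omega⟩) (⟨0, by omega⟩ : Fin n)
  have e01 := congrFun (congrFun hmat ⟨0, by omega⟩) (⟨1, by omega⟩ : Fin n)
  have e10 := congrFun (congrFun hmat ⟨1, by omega⟩) (⟨0, by omega⟩ : Fin n)
  have e22 := congrFun (congrFun hmat ⟨2, by omega⟩) (⟨2, by omega⟩ : Fin n)
  simp only [mul_assoc] at e00 e01 e10 e22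
  simp only [L0, L1] at e00 e01 e10 e22
  simp [L0, L1, genMat, Fin.ext_iff, hM0, hM1] at e00 e01 e10 e22
  by_contra hcon
  push_neg at hcon
  obtain ⟨ha, hd⟩ := hcon
  have hb : b = 0 := by
    have h : a * (b * d) = 0 := by linear_combination e01
    rcases mul_eq_zero.mp h with h' | h'
    · exact absurd h' ha
    · rcases mul_eq_zero.mp h' with h'' | h''
      · exact h''
      · exact absurd h'' hd
  have hc : c = 0 := by
    have h : a * (c * d) = 0 := by linear_combination e10
    rcases mul_eq_zero.mp h with h' | h'
    · exact absurd h' ha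
    · rcases mul_eq_zero.mp h' with h'' | h''
      · exact h''
      · exact absurd h'' hd
  subst hb hc
  have ha1 : a = 1 := by
    have h : a * (a - 1) = 0 := by linear_combination e00
    rcases mul_eq_zero.mp h with h' | h'
    · exact absurd h' ha
    · exact sub_eq_zero.mp h'
  have hd1 : d = 1 := by
    have h : d * (d - 1) = 0 := by linear_combination -e22
    rcases mul_eq_zero.mp h with h' | h'
    · exact absurd h' hd
    · exact sub_eq_zero.mp h'
  subst ha1 hd1
  exact hblock Matrix.one_fin_two.symm
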